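/- A sequence X : ℕ → Bool is infinitely often anti-complex (for every computable order f, K(X↾f(n)) ≤ n for infinitely many n) if and only if for every computable order f, K(X↾n) ≤ f(n) for infinitely many n. -/

import Mathlib

open Filter

/-- The length-`n` initial segment of an infinite binary sequence, as a list. -/
def strTake (X : ℕ → Bool) (n : ℕ) : List Bool := (List.range n).map X

/-- A computable order: non-decreasing, unbounded, computable, with value 0 at 0. -/
def ComputableOrder (f : ℕ → ℕ) : Prop :=
  Computable f ∧ Monotone f ∧ (∀ m, ∃ n, m ≤ f n) ∧ f 0 = 0

/-- A prefix-free machine: a partial computable map on binary strings whose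
domain is prefix-free. -/
def IsPrefixFreeMachine (U : List Bool →. List Bool) : Prop :=
  Partrec U ∧ ∀ p q : List Bool, (U p).Dom → (U q).Dom → p <+: q → p = q

/-- A universal (optimal) prefix-free machine. -/
def IsUniversalPFM (U : List Bool →. List Bool) : Prop :=
  IsPrefixFreeMachine U ∧ ∀ V : List Bool →. List Bool, IsPrefixFreeMachine V →
    ∃ c : ℕ, ∀ p τ, τ ∈ V p → ∃ q : List Bool, τ ∈ U q ∧ q.length ≤ p.length + c

/-- Prefix-free Kolmogorov complexity with respect to the machine `U`:
the length of a shortest `U`-program for `σ`. -/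
noncomputable def K (U : List Bool →. List Bool) (σ : List Bool) : ℕ :=
  sInf {n | ∃ p : List Bool, p.length = n ∧ σ ∈ U p}

/-! ### Auxiliary computability lemmas -/

lemma computable_sInf {p : ℕ → ℕ → Prop} [∀ a n, Decidable (p a n)]
    (hp : Computable₂ fun a n => decide (p a n)) (h : ∀ a, ∃ n, p a n) :
    Computable fun a => sInf {n | p a n} := by
  have hrf : Partrec fun a => Nat.rfind fun n => (Part.some (decide (p a n)) : Part Bool) :=
    Partrec.rfind hp
  refine hrf.of_eq_tot fun a => ?_
  have hne : {n | p a n}.Nonempty := h a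
  refine Nat.mem_rfind.2 ?_
  constructor
  · simpa using Nat.sInf_mem hne
  · intro m hm
    simpa using Nat.notMem_of_lt_sInf hm

lemma take_eq (l : List Bool) (k : ℕ) :
    l.take k = (List.range (min k l.length)).map (fun i => l.getD i false) := by
  apply List.ext_getElem
  · simp
  · intro i h1 h2
    simp at h2 ⊢
    rw [List.getElem?_eq_getElem (by omega : i < l.length)]
    rfl

lemma drop_eq (l : List Bool) (k : ℕ) :
    l.drop k = (List.range (l.length - k)).map (fun i => l.getD (k + i) false) := by
  apply List.ext_getElem
  · simp
  · intro i h1 h2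
    simp at h2 ⊢
    rw [List.getElem?_eq_getElem (by omega : k + i < l.length)]
    rfl

lemma replicate_eq (k : ℕ) : List.replicate k true = (List.range k).map (fun _ => true) := by
  simp [List.map_const]

lemma primrec_take : Primrec₂ (fun (l : List Bool) (k : ℕ) => l.take k) := by
  have : Primrec fun x : List Bool × ℕ =>
      (List.range (min x.2 x.1.length)).map (fun i => x.1.getD i false) := by
    apply Primrec.list_map
      (Primrec.list_range.comp (Primrec.nat_min.comp Primrec.snd
        (Primrec.list_length.comp Primrec.fst)))
    exact ((Primrec.list_getD false).comp (Primrec.fst.comp Primrec.fst) Primrec.snd).to₂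
  exact Primrec₂.of_eq (this.to₂) fun l k => (take_eq l k).symm

lemma primrec_drop : Primrec₂ (fun (l : List Bool) (k : ℕ) => l.drop k) := by
  have : Primrec fun x : List Bool × ℕ =>
      (List.range (x.1.length - x.2)).map (fun i => x.1.getD (x.2 + i) false) := by
    apply Primrec.list_map
      (Primrec.list_range.comp (Primrec.nat_sub.comp (Primrec.list_length.comp Primrec.fst)
        Primrec.snd))
    exact ((Primrec.list_getD false).comp (Primrec.fst.comp Primrec.fst)
      (Primrec.nat_add.comp (Primrec.snd.comp Primrec.fst) Primrec.snd)).to₂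
  exact Primrec₂.of_eq (this.to₂) fun l k => (drop_eq l k).symm

lemma primrec_replicate : Primrec (fun k => List.replicate k true) := by
  have : Primrec fun k => (List.range k).map (fun _ => true) :=
    Primrec.list_map Primrec.list_range (Primrec.const true).to₂
  exact this.of_eq fun k => (replicate_eq k).symm

/-! ### A surjective prefix-free machine -/

/-- Decoder for the surjective prefix-free machine. -/
def wdec (p : List Bool) : Option (List Bool) :=
  if p = List.replicate (p.length / 2) true ++ false :: p.drop (p.length / 2 + 1)
      ∧ p.length = 2 * (p.length / 2) + 1
  then some (p.drop (p.length / 2 + 1)) else none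

lemma wdec_primrec : Primrec wdec := by
  have hhalf : Primrec fun p : List Bool => p.length / 2 :=
    Primrec.nat_div.comp Primrec.list_length (Primrec.const 2)
  have hdrop : Primrec fun p : List Bool => p.drop (p.length / 2 + 1) :=
    primrec_drop.comp Primrec.id (Primrec.succ.comp hhalf)
  have hrhs : Primrec fun p : List Bool =>
      List.replicate (p.length / 2) true ++ false :: p.drop (p.length / 2 + 1) :=
    Primrec.list_append.comp (primrec_replicate.comp hhalf)
      (Primrec.list_cons.comp (Primrec.const false) hdrop)
  have hc1 : PrimrecPred fun p : List Bool =>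
      p = List.replicate (p.length / 2) true ++ false :: p.drop (p.length / 2 + 1) :=
    Primrec.eq.comp Primrec.id hrhs
  have hc2 : PrimrecPred fun p : List Bool => p.length = 2 * (p.length / 2) + 1 :=
    Primrec.eq.comp Primrec.list_length
      (Primrec.succ.comp (Primrec.nat_mul.comp (Primrec.const 2) hhalf))
  exact Primrec.ite (hc1.and hc2) (Primrec.option_some.comp hdrop) (Primrec.const none)

/-- The surjective prefix-free machine. -/
def Wmach : List Bool →. List Bool := fun p => (wdec p : Part (List Bool))

lemma mem_Wmach {p σ : List Bool} : σ ∈ Wmach p ↔ wdec p = some σ := by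
  simp [Wmach, Part.mem_coe]

lemma Wmach_dom_getElem {p : List Bool} (h : (Wmach p).Dom) :
    ∃ hl : p.length = 2 * (p.length / 2) + 1,
      (∀ i (hi : i < p.length / 2), p[i]'(by omega) = true) ∧
      p[p.length / 2]'(by omega) = false := by
  have h' : (wdec p).isSome := by
    rcases Part.dom_iff_mem.1 h with ⟨σ, hσ⟩
    rw [mem_Wmach.1 hσ]; rfl
  unfold wdec at h'
  split at h'
  case isFalse => simp at h'
  case isTrue hcond =>
    obtain ⟨heq, hlen⟩ := hcond
    refine ⟨hlen, ?_, ?_⟩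
    · intro i hi
      rw [List.getElem_of_eq heq]
      rw [List.getElem_append_left (by simpa using hi)]
      simp
    · rw [List.getElem_of_eq heq]
      rw [List.getElem_append_right (by simp)]
      simp

lemma Wmach_pfm : IsPrefixFreeMachine Wmach := by
  constructor
  · exact Computable.ofOption wdec_primrec.to_comp
  · intro p q hp hq hpq
    obtain ⟨hl1, ht1, hf1⟩ := Wmach_dom_getElem hp
    obtain ⟨hl2, ht2, hf2⟩ := Wmach_dom_getElem hq
    have hlen : p.length ≤ q.length := hpq.length_le
    have hget : ∀ i (hi : i < p.length), p[i]'hi = q[i]'(by omega) := by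
      intro i hi; exact hpq.getElem hi
    have hk : p.length / 2 = q.length / 2 := by
      by_contra hne
      rcases Nat.lt_or_ge (p.length / 2) (q.length / 2) with hlt | hge
      · have := ht2 (p.length / 2) hlt
        rw [← hget (p.length / 2) (by omega)] at this
        rw [hf1] at this; exact Bool.false_ne_true this
      · have hlt : q.length / 2 < p.length / 2 := by omega
        have := ht1 (q.length / 2) hlt
        rw [hget (q.length / 2) (by omega)] at this
        rw [hf2] at this; exact Bool.false_ne_true this
    exact hpq.eq_of_length (by omega)

lemma Wmach_surj (σ : List Bool) : ∃ p, σ ∈ Wmach p := by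
  refine ⟨List.replicate σ.length true ++ false :: σ, ?_⟩
  set p := List.replicate σ.length true ++ false :: σ with hp
  have hlen : p.length = 2 * σ.length + 1 := by simp [hp]; omega
  have hhalf : p.length / 2 = σ.length := by omega
  have hdrop : p.drop (p.length / 2 + 1) = σ := by
    rw [hhalf, hp]
    rw [show List.replicate σ.length true ++ false :: σ
        = (List.replicate σ.length true ++ [false]) ++ σ by simp]
    rw [show σ.length + 1 = (List.replicate σ.length true ++ [false]).length by simp]
    exact List.drop_left
  rw [mem_Wmach]
  unfold wdec
  rw [if_pos ⟨by rw [hdrop, hhalf], by omega⟩, hdrop]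

theorem stmt14 (U : List Bool →. List Bool) (hU : IsUniversalPFM U) (X : ℕ → Bool) :
    (∀ f, ComputableOrder f → ∃ᶠ n in atTop, K U (strTake X (f n)) ≤ n) ↔
      (∀ f, ComputableOrder f → ∃ᶠ n in atTop, K U (strTake X n) ≤ f n) := by
  constructor
  · -- easy direction: apply hypothesis to the inverse of f
    intro h f hf
    obtain ⟨hfc, hfm, hfu, hf0⟩ := hf
    have hne : ∀ n, {k | n ≤ f k}.Nonempty := fun n => hfu n
    set g : ℕ → ℕ := fun n => sInf {k | n ≤ f k} with hgdef
    have hgspec : ∀ n, n ≤ f (g n) := fun n => Nat.sInf_mem (hne n)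
    have hgc : Computable g := by
      apply computable_sInf (p := fun n k => n ≤ f k)
      · exact (Primrec.nat_le.decide.to_comp.comp Computable.fst (hfc.comp Computable.snd)).to₂
      · exact hne
    have hgm : Monotone g := by
      intro a b hab
      exact csInf_le_csInf (OrderBot.bddBelow _) (hne b) (fun k hk => le_trans hab hk)
    have hg0 : g 0 = 0 := Nat.sInf_eq_zero.2 (Or.inl (by simp))
    have hgu : ∀ m, ∃ n, m ≤ g n := by
      intro m
      refine ⟨f m + 1, ?_⟩
      by_contra h'
      push_neg at h'
      have h1 : f (g (f m + 1)) ≤ f m := hfm (by omega)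
      have h2 := hgspec (f m + 1)
      omega
    have hfreq := h g ⟨hgc, hgm, hgu, hg0⟩
    rw [frequently_atTop] at hfreq ⊢
    intro N
    obtain ⟨n, hn, hK⟩ := hfreq (f N + 1)
    refine ⟨g n, ?_, hK.trans (hgspec n)⟩
    by_contra h'
    push_neg at h'
    have h1 : f (g n) ≤ f N := hfm (le_of_lt h')
    have h2 := hgspec n
    omega
  · -- hard direction
    intro h f hf
    obtain ⟨hfc, hfm, hfu, hf0⟩ := hf
    have hne : ∀ m, {k | m < f (k + 1)}.Nonempty := by
      intro m
      obtain ⟨n, hn⟩ := hfu (m + 1)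
      exact ⟨n, lt_of_lt_of_le (by omega : m < f n) (hfm (Nat.le_succ n))⟩
    set t : ℕ → ℕ := fun m => sInf {k | m < f (k + 1)} with htdef
    have htspec : ∀ m, m < f (t m + 1) := fun m => Nat.sInf_mem (hne m)
    have htle : ∀ m, f (t m) ≤ m := by
      intro m
      rcases Nat.eq_zero_or_pos (t m) with h0 | hpos
      · rw [h0, hf0]; exact Nat.zero_le m
      · have hlt : t m - 1 < t m := by omega
        have h1 : t m - 1 ∉ {k | m < f (k + 1)} := Nat.notMem_of_lt_sInf hlt
        simp only [Set.mem_setOf_eq, not_lt] at h1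
        rwa [Nat.sub_add_cancel hpos] at h1
    have htm : Monotone t := by
      intro a b hab
      exact csInf_le_csInf (OrderBot.bddBelow _) (hne b) (fun k hk => lt_of_le_of_lt hab hk)
    have htc : Computable t := by
      apply computable_sInf (p := fun m k => m < f (k + 1))
      · exact (Primrec.nat_lt.decide.to_comp.comp Computable.fst
          (hfc.comp (Computable.succ.comp Computable.snd))).to₂
      · exact hne
    have htub : ∀ N m, f N ≤ m → N ≤ t m := by
      intro N m hm
      by_contra h'
      push_neg at h'
      have h1 : f (t m + 1) ≤ f N := hfm (by omega)
      have h2 := htspec m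
      omega
    -- the truncating machine V
    set gmap : List Bool → List Bool := fun σ => σ.take (f (t σ.length)) with hgmapdef
    have hgmapc : Computable gmap :=
      primrec_take.to_comp.comp Computable.id
        (hfc.comp (htc.comp Computable.list_length))
    set V : List Bool →. List Bool := fun p => (U p).map gmap with hVdef
    have hVpfm : IsPrefixFreeMachine V := by
      constructor
      · exact hU.1.1.map (hgmapc.comp Computable.snd).to₂
      · intro p q hp hq hpq
        exact hU.1.2 p q hp hq hpq
    obtain ⟨cV, hcV⟩ := hU.2 V hVpfm
    obtain ⟨cW, hcW⟩ := hU.2 Wmach Wmach_pfm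
    set c' := max cV (t 0) with hc'def
    set g : ℕ → ℕ := fun m => t m - c' with hgdef
    have hgCO : ComputableOrder g := by
      refine ⟨?_, ?_, ?_, ?_⟩
      · exact Primrec.nat_sub.to_comp.comp htc (Computable.const c')
      · intro a b hab
        exact Nat.sub_le_sub_right (htm hab) c'
      · intro m
        refine ⟨f (m + c'), ?_⟩
        have := htub (m + c') (f (m + c')) le_rfl
        simp only [hgdef]
        omega
      · simp only [hgdef]
        have : t 0 ≤ c' := le_max_right _ _
        omega
    have hfreq := h g hgCO
    rw [frequently_atTop] at hfreq ⊢
    intro N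
    obtain ⟨m, hm, hK⟩ := hfreq (f (N + c'))
    have htm_ge : N + c' ≤ t m := htub (N + c') m hm
    refine ⟨t m, by omega, ?_⟩
    -- a shortest program for strTake X m exists
    obtain ⟨p₀, hp₀⟩ := Wmach_surj (strTake X m)
    obtain ⟨q₀, hq₀, _⟩ := hcW p₀ _ hp₀
    have hKne : {n | ∃ p : List Bool, p.length = n ∧ strTake X m ∈ U p}.Nonempty :=
      ⟨q₀.length, q₀, rfl, hq₀⟩
    obtain ⟨p, hplen, hpU⟩ := Nat.sInf_mem hKne
    have hVmem : strTake X (f (t m)) ∈ V p := by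
      have hgm : gmap (strTake X m) = strTake X (f (t m)) := by
        show (strTake X m).take (f (t (strTake X m).length)) = strTake X (f (t m))
        have hlen : (strTake X m).length = m := by simp [strTake]
        rw [hlen]
        show (List.map X (List.range m)).take (f (t m)) = strTake X (f (t m))
        rw [← List.map_take, List.take_range, min_eq_left (htle m)]
        rfl
      rw [hVdef, ← hgm]
      exact Part.mem_map gmap hpU
    obtain ⟨q, hqU, hqlen⟩ := hcV p _ hVmem
    have h1 : K U (strTake X (f (t m))) ≤ q.length := Nat.sInf_le ⟨q, rfl, hqU⟩
    have h2 : p.length = K U (strTake X m) := hplen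
    have h3 : K U (strTake X m) ≤ g m := hK
    have h4 : cV ≤ c' := le_max_left _ _
    simp only [hgdef] at h3
    omega
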